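/- Let 𝒞(a,v,w) be as above (N ≥ 3) and let i ≥ 3. Let C̆_i = 𝒞(a,v,w) + E_{1,i} where E_{1,i} is the elementary matrix with a 1 in position (1,i). Then det C̆_i = a^(N-2)·(v_1·w_2 - w_1·v_2) + a^(N-3)·(w_i·v_2 - v_i·w_2). -/

import Mathlib

/-- The matrix `𝒞(a,v,w)`: first column `v`, second column `w`, remaining diagonal
entries `a`, zeros elsewhere. -/
def matC (N : ℕ) (a : ℝ) (v w : Fin N → ℝ) : Matrix (Fin N) (Fin N) ℝ :=
  fun i j =>
    if (j : ℕ) = 0 then v i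
    else if (j : ℕ) = 1 then w i
    else if i = j then a else 0

def blockFun (N i : ℕ) (hN : 3 ≤ N) (hi : 3 ≤ i) (hiN : i ≤ N) :
    (Fin 3 ⊕ Fin (N - 3)) → Fin N := Sum.elim
  (fun k => if (k : ℕ) = 0 then (⟨0, by omega⟩ : Fin N)
    else if (k : ℕ) = 1 then ⟨1, by omega⟩ else ⟨i - 1, Nat.lt_of_lt_of_le (Nat.sub_lt (by omega) Nat.one_pos) hiN⟩)
  (fun k => if (k : ℕ) + 2 < i - 1 then ⟨(k : ℕ) + 2, by omega⟩
    else ⟨(k : ℕ) + 3, by omega⟩)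

noncomputable def blockEquiv (N i : ℕ) (hN : 3 ≤ N) (hi : 3 ≤ i) (hiN : i ≤ N) :
    (Fin 3 ⊕ Fin (N - 3)) ≃ Fin N :=
  Equiv.ofBijective (blockFun N i hN hi hiN) <| by
    refine (Fintype.bijective_iff_injective_and_card _).2 ⟨?_, by simp; omega⟩
    have hL : Function.LeftInverse (fun (j : Fin N) =>
        if h0 : j.val = 0 then (Sum.inl 0 : Fin 3 ⊕ Fin (N - 3))
        else if h1 : j.val = 1 then Sum.inl 1
        else if h2 : j.val = i - 1 then Sum.inl 2
        else if h : j.val < i - 1 then Sum.inr (⟨j.val - 2, by omega⟩ : Fin (N - 3))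
        else Sum.inr (⟨j.val - 3, by omega⟩ : Fin (N - 3))) (blockFun N i hN hi hiN) := by
      rintro (k | k)
      · fin_cases k <;> simp [blockFun, Fin.ext_iff, -Fin.val_eq_zero_iff] <;> split_ifs <;>
          simp_all [Fin.ext_iff] <;> omega
      · obtain ⟨k, hk⟩ := k
        simp only [blockFun, Sum.elim_inr, apply_ite (Fin.val)]
        split_ifs <;> simp_all [Fin.ext_iff] <;> omega
    exact hL.injective

theorem matC_plus_unit_det (N : ℕ) (hN : 3 ≤ N) (a : ℝ) (v w : Fin N → ℝ)
    (i : ℕ) (hi : 3 ≤ i) (hiN : i ≤ N) :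
    (matC N a v w +
        Matrix.single (⟨0, by omega⟩ : Fin N) (⟨i - 1, by omega⟩ : Fin N) (1 : ℝ)).det =
      a ^ (N - 2) * (v ⟨0, by omega⟩ * w ⟨1, by omega⟩ - w ⟨0, by omega⟩ * v ⟨1, by omega⟩)
      + a ^ (N - 3) *
        (w ⟨i - 1, by omega⟩ * v ⟨1, by omega⟩ - v ⟨i - 1, by omega⟩ * w ⟨1, by omega⟩) := by
  have e := blockEquiv N i hN hi hiN
  rw [← Matrix.det_submatrix_equiv_self (blockEquiv N i hN hi hiN)]
  have hcoe : ⇑(blockEquiv N i hN hi hiN) = blockFun N i hN hi hiN := rfl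
  rw [hcoe]
  set M : Matrix (Fin N) (Fin N) ℝ := matC N a v w +
        Matrix.single (⟨0, by omega⟩ : Fin N) (⟨i - 1, by omega⟩ : Fin N) (1 : ℝ) with hM
  have entry : ∀ x y : Fin N, M x y =
      (if (y : ℕ) = 0 then v x
        else if (y : ℕ) = 1 then w x
        else if x = y then a else 0)
      + (if (x : ℕ) = 0 ∧ (y : ℕ) = i - 1 then 1 else 0) := by
    intro x y
    rw [hM]
    simp only [Matrix.add_apply, matC, Matrix.single, Matrix.of_apply]
    congr 1
    by_cases h1 : (x : ℕ) = 0 ∧ (y : ℕ) = i - 1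
    · rw [if_pos h1, if_pos]
      exact ⟨by simp [Fin.ext_iff, h1.1], by simp [Fin.ext_iff, h1.2]⟩
    · rw [if_neg h1, if_neg]
      simp only [Fin.ext_iff] at h1 ⊢
      tauto
  clear hM
  have key : M.submatrix (blockFun N i hN hi hiN) (blockFun N i hN hi hiN) =
      Matrix.fromBlocks
        !![v ⟨0, by omega⟩, w ⟨0, by omega⟩, 1;
           v ⟨1, by omega⟩, w ⟨1, by omega⟩, 0;
           v ⟨i - 1, by omega⟩, w ⟨i - 1, by omega⟩, a]
        0 ((M.submatrix (blockFun N i hN hi hiN) (blockFun N i hN hi hiN)).toBlocks₂₁)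
        (Matrix.diagonal fun _ => a) := by
    ext x y
    rcases x with k | k <;> rcases y with l | l
    · simp only [Matrix.fromBlocks_apply₁₁, Matrix.submatrix_apply, entry]
      fin_cases k <;> fin_cases l <;>
        simp [blockFun, Fin.ext_iff, -Fin.val_eq_zero_iff] <;>
        (first
        | omega
        | (split_ifs <;>
            (first | contradiction | (exfalso; omega) | rfl | norm_num | tauto | omega)))
    · simp only [Matrix.fromBlocks_apply₁₂, Matrix.zero_apply, Matrix.submatrix_apply, entry]
      obtain ⟨l, hl⟩ := l
      fin_cases k <;>
        simp [blockFun, Fin.ext_iff, apply_ite (Fin.val), -Fin.val_eq_zero_iff] <;>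
        (first
        | omega
        | (split_ifs <;>
            (first | contradiction | (exfalso; omega) | rfl | norm_num | tauto | omega)))
    · simp only [Matrix.fromBlocks_apply₂₁]
      rfl
    · simp only [Matrix.fromBlocks_apply₂₂, Matrix.submatrix_apply, entry,
        Matrix.diagonal_apply]
      obtain ⟨k, hk⟩ := k; obtain ⟨l, hl⟩ := l
      simp only [blockFun, Sum.elim_inr, Fin.ext_iff, apply_ite (Fin.val)]
      split_ifs <;> (first | contradiction | (exfalso; omega) | rfl | norm_num | tauto | omega)
  rw [key, Matrix.det_fromBlocks_zero₁₂, Matrix.det_fin_three, Matrix.det_diagonal]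
  simp only [Matrix.cons_val', Matrix.cons_val_zero, Matrix.cons_val_one, Matrix.head_cons,
    Matrix.empty_val', Matrix.cons_val_fin_one, Matrix.head_fin_const, Finset.prod_const,
    Finset.card_univ, Fintype.card_fin, Matrix.of_apply, Matrix.cons_val_two, Matrix.tail_cons]
  have hN2 : N - 2 = (N - 3) + 1 := by omega
  rw [hN2, pow_succ]
  ring
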